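/- arXiv:1504.06518 — 2 statements merged into one kernel-verified Lean document; each statement's English description precedes it below -/
import Mathlib

section
/- For the perturbed family F_s(x,y,z,w) with rows (z, y+w, x+s) and (w, x, y), s ≠ 0, the variety X_s = F_s⁻¹(M²_{2,3}) ⊂ ℂ⁴ is smooth: at every point of X_s the Jacobian matrix of the three 2×2 minors has rank 2. -/
open Matrix Module

lemma aux_two_le_rank (M : Matrix (Fin 3) (Fin 4) ℂ) (i i' : Fin 3) (j j' : Fin 4)
    (h : M i j * M i' j' - M i j' * M i' j ≠ 0) : 2 ≤ M.rank := by
  classical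
  set P : Matrix (Fin 2) (Fin 3) ℂ := Matrix.of fun a k => if k = ![i, i'] a then 1 else 0 with hP
  set Q : Matrix (Fin 4) (Fin 2) ℂ := Matrix.of fun k b => if k = ![j, j'] b then 1 else 0 with hQ
  have hB : P * M * Q = !![M i j, M i j'; M i' j, M i' j'] := by
    ext a b
    fin_cases a <;> fin_cases b <;>
      simp [hP, hQ, Matrix.mul_apply, Fin.sum_univ_succ] <;> fin_cases i <;> fin_cases j <;> simp
  have hU : IsUnit (!![M i j, M i j'; M i' j, M i' j'] : Matrix (Fin 2) (Fin 2) ℂ) := by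
    rw [Matrix.isUnit_iff_isUnit_det, Matrix.det_fin_two, isUnit_iff_ne_zero]
    simpa using fun hc => h (by linear_combination hc)
  have h2 : (P * M * Q).rank = 2 := by
    rw [hB, Matrix.rank_of_isUnit _ hU, Fintype.card_fin]
  calc (2 : ℕ) = (P * M * Q).rank := h2.symm
    _ ≤ (P * M).rank := Matrix.rank_mul_le_left _ _
    _ ≤ M.rank := Matrix.rank_mul_le_right _ _

lemma aux_rank_le_two (M : Matrix (Fin 3) (Fin 4) ℂ) (v : Fin 3 → ℂ) (hv : v ≠ 0)
    (h : Mᵀ *ᵥ v = 0) : M.rank ≤ 2 := by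
  rw [← Matrix.rank_transpose]
  have hker : v ∈ LinearMap.ker (Matrix.mulVecLin Mᵀ) := h
  have hk : 1 ≤ finrank ℂ (LinearMap.ker (Matrix.mulVecLin Mᵀ)) := by
    rw [Nat.one_le_iff_ne_zero]
    intro h0
    rw [Submodule.finrank_eq_zero.mp h0, Submodule.mem_bot] at hker
    exact hv hker
  have hsum := LinearMap.finrank_range_add_finrank_ker (Matrix.mulVecLin Mᵀ)
  rw [Module.finrank_fintype_fun_eq_card, Fintype.card_fin] at hsum
  have hr : Mᵀ.rank = finrank ℂ (LinearMap.range (Matrix.mulVecLin Mᵀ)) := rfl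
  omega

/-- For `s ≠ 0`, the determinantal variety `X_s ⊂ ℂ⁴` cut out by the `2×2` minors of the
matrix with rows `(z, y+w, x+s)` and `(w, x, y)` is smooth: at every point of `X_s` the
Jacobian matrix of the three minors has rank `2` (the codimension of `X_s`). -/
theorem essential_smoothing_is_smooth (s : ℂ) (hs : s ≠ 0) (x y z w : ℂ)
    (h1 : z * x - w * (y + w) = 0)
    (h2 : z * y - w * (x + s) = 0)
    (h3 : (y + w) * y - x * (x + s) = 0) :
    (!![z, -w, x, -(y + 2 * w);
        -w, z, y, -(x + s);
        -(2 * x + s), 2 * y + w, 0, y] : Matrix (Fin 3) (Fin 4) ℂ).rank = 2 := by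
  set M : Matrix (Fin 3) (Fin 4) ℂ :=
    !![z, -w, x, -(y + 2 * w);
       -w, z, y, -(x + s);
       -(2 * x + s), 2 * y + w, 0, y] with hM
  have e00 : M 0 0 = z := rfl
  have e01 : M 0 1 = -w := rfl
  have e02 : M 0 2 = x := rfl
  have e03 : M 0 3 = -(y + 2*w) := rfl
  have e10 : M 1 0 = -w := rfl
  have e11 : M 1 1 = z := rfl
  have e12 : M 1 2 = y := rfl
  have e13 : M 1 3 = -(x + s) := rfl
  have e20 : M 2 0 = -(2*x + s) := rfl
  have e21 : M 2 1 = 2*y + w := rfl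
  have e22 : M 2 2 = 0 := rfl
  have e23 : M 2 3 = y := rfl
  apply le_antisymm
  · -- rank ≤ 2 via a syzygy vector in the kernel of Mᵀ
    by_cases hv1 : x + s = 0 ∧ y + w = 0 ∧ z = 0
    · obtain ⟨hv1a, hv1b, hv1c⟩ := hv1
      apply aux_rank_le_two M ![y, -x, w]
      · intro hc
        have hx0 : -x = 0 := congrFun hc 1
        exact hs (by linear_combination hv1a + hx0)
      · funext j
        fin_cases j
        · simp [hM, Matrix.mulVec, dotProduct, Fin.sum_univ_succ]
          linear_combination h2
        · simp [hM, Matrix.mulVec, dotProduct, Fin.sum_univ_succ]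
          linear_combination -h1
        · simp [hM, Matrix.mulVec, dotProduct, Fin.sum_univ_succ]
          ring_nf
        · simp [hM, Matrix.mulVec, dotProduct, Fin.sum_univ_succ]
          linear_combination -h3
    · apply aux_rank_le_two M ![x + s, -(y + w), z]
      · intro hc
        refine hv1 ⟨congrFun hc 0, ?_, congrFun hc 2⟩
        have h : -(y + w) = 0 := congrFun hc 1
        linear_combination -h
      · funext j
        fin_cases j <;>
          simp [hM, Matrix.mulVec, dotProduct, Fin.sum_univ_succ]
        · linear_combination -h1
        · linear_combination h2
        · linear_combination -h3
        · linear_combination h2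
  · -- 2 ≤ rank : find a nonvanishing 2×2 minor
    by_cases hw : w = 0
    · subst hw
      by_cases hx : x = 0
      · by_cases hy : y = 0
        · subst hx; subst hy
          by_cases hz : z = 0
          · apply aux_two_le_rank M 1 2 0 3
            rw [e10, e23, e13, e20]
            intro hc
            exact hs (by
              have := mul_self_eq_zero.mp (show s * s = 0 by linear_combination -hc)
              exact this)
          · apply aux_two_le_rank M 1 2 0 1
            rw [e10, e21, e11, e20]
            intro hc
            exact hz (by
              have hzs : z * s = 0 := by linear_combination hc
              rcases mul_eq_zero.mp hzs with h | h
              · exact h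
              · exact absurd h hs)
        · -- x = 0, y ≠ 0 : z = 0 from h2, minor rows (0,2) cols (0,3)
          have hz : z = 0 := by
            rcases mul_eq_zero.mp (show z * y = 0 by linear_combination h2) with h | h
            · exact h
            · exact absurd h hy
          apply aux_two_le_rank M 0 2 0 3
          rw [e00, e23, e03, e20]
          intro hc
          apply hy
          rcases mul_eq_zero.mp (show y * s = 0 by
            linear_combination -hc + y*hz - 2*y*hx) with h | h
          · exact h
          · exact absurd h hs
      · -- x ≠ 0, w = 0 ⇒ z = 0 from h1
        have hz : z = 0 := by
          rcases mul_eq_zero.mp (show z * x = 0 by linear_combination h1) with h | h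
          · exact h
          · exact absurd h hx
        by_cases hy : y = 0
        · -- y = 0 : h3 gives x + s = 0
          have hxs : x + s = 0 := by
            rcases mul_eq_zero.mp (show x * (x + s) = 0 by linear_combination -h3 + y*hy) with h | h
            · exact absurd h hx
            · exact h
          apply aux_two_le_rank M 0 2 0 2
          rw [e00, e22, e02, e20]
          intro hc
          exact hx (mul_self_eq_zero.mp (by linear_combination hc - x*hxs))
        · apply aux_two_le_rank M 0 2 2 3
          rw [e02, e23, e03, e22]
          intro hc
          rcases mul_eq_zero.mp (show x * y = 0 by linear_combination hc) with h | h
          · exact hx h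
          · exact hy h
    · -- w ≠ 0
      by_cases hd1 : z * y + w * x = 0
      · by_cases hd2 : w * (x + s) + z * (y + 2*w) = 0
        · exfalso
          have h2x : s + 2*x = 0 := by
            rcases mul_eq_zero.mp (show w * (s + 2*x) = 0 by linear_combination hd1 - h2) with h | h
            · exact absurd h hw
            · exact h
          have hx : x ≠ 0 := by
            intro h
            exact hs (by linear_combination h2x - 2*h)
          have h2z : s + 2*z = 0 := by
            rcases mul_eq_zero.mp (show w * (s + 2*z) = 0 by linear_combination hd2 - hd1) with h | h
            · exact absurd h hw
            · exact h
          have hzx : z = x := by linear_combination h2z/2 - h2x/2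
          have hyw : y + w = 0 := by
            rcases mul_eq_zero.mp (show x * (y + w) = 0 by linear_combination hd1 - y*hzx) with h | h
            · exact absurd h hx
            · exact h
          exact hx (mul_self_eq_zero.mp (by linear_combination h1 - x*hzx + w*hyw))
        · apply aux_two_le_rank M 0 1 1 3
          rw [e01, e13, e03, e11]
          intro hc
          exact hd2 (by linear_combination hc)
      · apply aux_two_le_rank M 0 1 0 2
        rw [e00, e12, e02, e10]
        intro hc
        exact hd1 (by linear_combination hc)
end

section
/- A hyperplane H ⊂ ℂ^N through the origin that is transversal to every limit of tangent spaces of the regular part of an analytic variety X at 0 is not itself a limit of tangent hyperplanes to X at 0; conversely, a hyperplane that is a limit of tangent hyperplanes to X at 0 fails to be transversal to some limiting tangent space. -/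
set_option maxHeartbeats 1000000

open Filter Topology

noncomputable section

variable (N : ℕ)

/-- Convergence of a sequence of subspaces of `ℂ^N` to a subspace (convergence in the
Grassmannian), expressed via pointwise convergence of the orthogonal projections. -/
def SubspaceTendsto (T : ℕ → Submodule ℂ (EuclideanSpace ℂ (Fin N)))
    (L : Submodule ℂ (EuclideanSpace ℂ (Fin N))) : Prop :=
  ∀ v : EuclideanSpace ℂ (Fin N),
    Tendsto (fun k => (Submodule.orthogonalProjection (T k) v : EuclideanSpace ℂ (Fin N))) atTop
      (𝓝 (Submodule.orthogonalProjection L v))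

/-- `T` is a limit at `0` of tangent spaces to the regular part `Xreg` of `X`,
where `τ x` is the tangent space to `Xreg` at `x`. -/
def IsLimitTangentSpace (Xreg : Set (EuclideanSpace ℂ (Fin N)))
    (τ : EuclideanSpace ℂ (Fin N) → Submodule ℂ (EuclideanSpace ℂ (Fin N)))
    (T : Submodule ℂ (EuclideanSpace ℂ (Fin N))) : Prop :=
  ∃ x : ℕ → EuclideanSpace ℂ (Fin N),
    (∀ k, x k ∈ Xreg) ∧ (∀ k, x k ≠ 0) ∧ Tendsto x atTop (𝓝 0) ∧
    SubspaceTendsto N (fun k => τ (x k)) T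

/-- `H` is a limit at `0` of tangent hyperplanes to `X`: a limit of hyperplanes `H k`
containing the tangent spaces `τ (x k)` along a sequence `x k → 0` in the regular part. -/
def IsLimitTangentHyperplane (Xreg : Set (EuclideanSpace ℂ (Fin N)))
    (τ : EuclideanSpace ℂ (Fin N) → Submodule ℂ (EuclideanSpace ℂ (Fin N)))
    (H : Submodule ℂ (EuclideanSpace ℂ (Fin N))) : Prop :=
  ∃ (x : ℕ → EuclideanSpace ℂ (Fin N))
    (Hs : ℕ → Submodule ℂ (EuclideanSpace ℂ (Fin N))),
    (∀ k, x k ∈ Xreg) ∧ (∀ k, x k ≠ 0) ∧ Tendsto x atTop (𝓝 0) ∧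
    (∀ k, Module.finrank ℂ (Hs k) = N - 1) ∧ (∀ k, τ (x k) ≤ Hs k) ∧
    SubspaceTendsto N Hs H

namespace Prop41Aux

local notation "E'" => EuclideanSpace ℂ (Fin N)

/-- Norm of the (coerced) orthogonal projection of a vector is at most the norm. -/
lemma norm_proj_coe_le (K : Submodule ℂ (EuclideanSpace ℂ (Fin N))) (w : E') :
    ‖(Submodule.orthogonalProjection K w : E')‖ ≤ ‖w‖ := by
  calc ‖(Submodule.orthogonalProjection K w : E')‖ = ‖Submodule.orthogonalProjection K w‖ := rfl
    _ ≤ ‖Submodule.orthogonalProjection K‖ * ‖w‖ := (Submodule.orthogonalProjection K).le_opNorm w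
    _ ≤ 1 * ‖w‖ := mul_le_mul_of_nonneg_right (Submodule.orthogonalProjectionOnto_norm_le _) (norm_nonneg w)
    _ = ‖w‖ := one_mul _

/-- Compactness of the Grassmannian: any sequence of subspaces has a subsequence whose
orthogonal projections converge pointwise to the orthogonal projection on some subspace. -/
lemma exists_limit_proj (K : ℕ → Submodule ℂ (EuclideanSpace ℂ (Fin N))) :
    ∃ (T : Submodule ℂ (EuclideanSpace ℂ (Fin N))) (φ : ℕ → ℕ), StrictMono φ ∧
      ∀ v : E', Tendsto (fun k => (Submodule.orthogonalProjection (K (φ k)) v : E')) atTop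
        (𝓝 (Submodule.orthogonalProjection T v)) := by
  haveI : ProperSpace (E' →L[ℂ] E') := FiniteDimensional.proper ℂ _
  set P : ℕ → (E' →L[ℂ] E') := fun k => (K k).subtypeL ∘L Submodule.orthogonalProjection (K k) with hP
  have hb : ∀ k, P k ∈ Metric.closedBall (0 : E' →L[ℂ] E') 1 := by
    intro k
    rw [Metric.mem_closedBall, dist_zero_right]
    refine ContinuousLinearMap.opNorm_le_bound _ zero_le_one fun v => ?_
    rw [one_mul]
    exact norm_proj_coe_le N (K k) v
  obtain ⟨Q₀, -, φ, hφ, hconv⟩ := tendsto_subseq_of_bounded Metric.isBounded_closedBall hb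
  have hsa : IsSelfAdjoint Q₀ := by
    have hadj : Tendsto (fun k => ContinuousLinearMap.adjoint ((P ∘ φ) k)) atTop
        (𝓝 (ContinuousLinearMap.adjoint Q₀)) :=
      ((ContinuousLinearMap.adjoint :
        (E' →L[ℂ] E') ≃ₗᵢ⋆[ℂ] (E' →L[ℂ] E')).continuous.tendsto Q₀).comp hconv
    have h2 : (fun k => ContinuousLinearMap.adjoint ((P ∘ φ) k)) = P ∘ φ := by
      funext k
      exact ContinuousLinearMap.isSelfAdjoint_iff'.mp
        (isSelfAdjoint_starProjection (K (φ k)))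
    rw [h2] at hadj
    exact ContinuousLinearMap.isSelfAdjoint_iff'.mpr (tendsto_nhds_unique hadj hconv)
  have hid : Q₀ * Q₀ = Q₀ := by
    have h1 : Tendsto (fun k => (P ∘ φ) k * (P ∘ φ) k) atTop (𝓝 (Q₀ * Q₀)) := hconv.mul hconv
    have h2 : (fun k => (P ∘ φ) k * (P ∘ φ) k) = P ∘ φ := by
      funext k
      refine ContinuousLinearMap.ext fun v => ?_
      simp only [ContinuousLinearMap.mul_apply, Function.comp_apply, hP,
        ContinuousLinearMap.comp_apply, Submodule.subtypeL_apply]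
      exact Submodule.starProjection_eq_self_iff.mpr (Submodule.orthogonalProjection _ v).2
    rw [h2] at h1
    exact tendsto_nhds_unique h1 hconv
  refine ⟨LinearMap.range (Q₀ : E' →ₗ[ℂ] E'), φ, hφ, fun v => ?_⟩
  have hproj : (Submodule.orthogonalProjection (LinearMap.range (Q₀ : E' →ₗ[ℂ] E')) v : E') = Q₀ v := by
    apply Submodule.eq_starProjection_of_mem_of_inner_eq_zero (K := LinearMap.range (Q₀ : E' →ₗ[ℂ] E'))
    · exact ⟨v, rfl⟩
    · rintro w ⟨u, rfl⟩
      have hPP : Q₀ (Q₀ v) = Q₀ v := by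
        have := congrArg (fun A : E' →L[ℂ] E' => A v) hid
        simpa using this
      have hz : Q₀ (v - Q₀ v) = 0 := by rw [map_sub, hPP, sub_self]
      have hadj : ContinuousLinearMap.adjoint Q₀ = Q₀ :=
        ContinuousLinearMap.isSelfAdjoint_iff'.mp hsa
      have h3 := (ContinuousLinearMap.adjoint_inner_left Q₀ u (v - Q₀ v)).symm
      rw [hadj] at h3
      simp only [ContinuousLinearMap.coe_coe]
      rw [h3, hz, inner_zero_left]
  rw [hproj]
  have heval : Tendsto (fun A : E' →L[ℂ] E' => A v) (𝓝 Q₀) (𝓝 (Q₀ v)) :=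
    (ContinuousLinearMap.apply ℂ E' v).continuous.tendsto Q₀
  exact heval.comp hconv

end Prop41Aux

/-- Proposition 4.1: a hyperplane `H ⊂ ℂ^N` through `0` is general to `X` at `0`
(transversal to every limit of tangent spaces of the regular part of `X` at `0`) if and
only if `H` is not a limit of tangent hyperplanes to `X` at `0`. -/
theorem general_iff_not_limit_of_tangent_hyperplanes
    (d : ℕ) (hd : 1 ≤ d) (hdN : d ≤ N) (hN : 1 ≤ N)
    (Xreg : Set (EuclideanSpace ℂ (Fin N)))
    (τ : EuclideanSpace ℂ (Fin N) → Submodule ℂ (EuclideanSpace ℂ (Fin N)))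
    (hτ : ∀ x ∈ Xreg, Module.finrank ℂ (τ x) = d)
    (hacc : (0 : EuclideanSpace ℂ (Fin N)) ∈ closure (Xreg \ {0}))
    (H : Submodule ℂ (EuclideanSpace ℂ (Fin N)))
    (hH : Module.finrank ℂ H = N - 1) :
    (∀ T : Submodule ℂ (EuclideanSpace ℂ (Fin N)),
        IsLimitTangentSpace N Xreg τ T → H ⊔ T = ⊤) ↔
      ¬ IsLimitTangentHyperplane N Xreg τ H := by
  have hfrE : Module.finrank ℂ (EuclideanSpace ℂ (Fin N)) = N := finrank_euclideanSpace_fin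
  constructor
  · intro htrans hlim
    obtain ⟨x, Hs, hxreg, hxne, hx0, hHrank, hτHs, hHsH⟩ := hlim
    obtain ⟨T, φ, hφ, hTconv⟩ := Prop41Aux.exists_limit_proj N (fun k => τ (x k))
    have hlimT : IsLimitTangentSpace N Xreg τ T :=
      ⟨x ∘ φ, fun k => hxreg (φ k), fun k => hxne (φ k), hx0.comp hφ.tendsto_atTop, hTconv⟩
    have hTH : T ≤ H := by
      intro v hv
      have hvT : (Submodule.orthogonalProjection T v : EuclideanSpace ℂ (Fin N)) = v :=
        Submodule.starProjection_eq_self_iff.mpr hv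
      set a : ℕ → EuclideanSpace ℂ (Fin N) :=
        fun k => (Submodule.orthogonalProjection (τ (x (φ k))) v : EuclideanSpace ℂ (Fin N)) with ha_def
      have ha : Tendsto a atTop (𝓝 v) := by
        have := hTconv v
        rwa [hvT] at this
      have h2 : Tendsto (fun k => (Submodule.orthogonalProjection (Hs (φ k)) v : EuclideanSpace ℂ (Fin N)))
          atTop (𝓝 (Submodule.orthogonalProjection H v)) := (hHsH v).comp hφ.tendsto_atTop
      have hdiff : Tendsto (fun k =>
          (Submodule.orthogonalProjection (Hs (φ k)) (a k) : EuclideanSpace ℂ (Fin N)) -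
          (Submodule.orthogonalProjection (Hs (φ k)) v : EuclideanSpace ℂ (Fin N))) atTop (𝓝 0) := by
        apply squeeze_zero_norm (a := fun k => ‖a k - v‖)
        · intro k
          have hm : (Submodule.orthogonalProjection (Hs (φ k)) (a k) : EuclideanSpace ℂ (Fin N)) -
              (Submodule.orthogonalProjection (Hs (φ k)) v : EuclideanSpace ℂ (Fin N)) =
              (Submodule.orthogonalProjection (Hs (φ k)) (a k - v) : EuclideanSpace ℂ (Fin N)) := by
            rw [map_sub]
            rfl
          rw [hm]
          exact Prop41Aux.norm_proj_coe_le N _ _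
        · have := tendsto_sub_nhds_zero_iff.mpr ha
          simpa using this.norm
      have h3 : Tendsto (fun k =>
          (Submodule.orthogonalProjection (Hs (φ k)) (a k) : EuclideanSpace ℂ (Fin N))) atTop
          (𝓝 (Submodule.orthogonalProjection H v)) := by
        have := hdiff.add h2
        simpa using this
      have h4 : (fun k =>
          (Submodule.orthogonalProjection (Hs (φ k)) (a k) : EuclideanSpace ℂ (Fin N))) = a := by
        funext k
        exact Submodule.starProjection_eq_self_iff.mpr (hτHs (φ k) (Submodule.orthogonalProjection _ v).2)
      rw [h4] at h3
      have h5 : (Submodule.orthogonalProjection H v : EuclideanSpace ℂ (Fin N)) = v :=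
        tendsto_nhds_unique h3 ha
      exact Submodule.starProjection_eq_self_iff.mp h5
    have h6 := htrans T hlimT
    rw [sup_eq_left.mpr hTH] at h6
    rw [h6, finrank_top, hfrE] at hH
    omega
  · intro hnl T hT
    by_contra hne
    obtain ⟨x, hxreg, hxne, hx0, hST⟩ := hT
    have hTH : T ≤ H := by
      have hfr : Module.finrank ℂ ((H ⊔ T : Submodule ℂ (EuclideanSpace ℂ (Fin N)))) < N := by
        have := Submodule.finrank_lt hne
        rwa [hfrE] at this
      have hge : Module.finrank ℂ H ≤
          Module.finrank ℂ ((H ⊔ T : Submodule ℂ (EuclideanSpace ℂ (Fin N)))) :=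
        Submodule.finrank_mono le_sup_left
      have heq : H = H ⊔ T := Submodule.eq_of_le_of_finrank_le le_sup_left (by omega)
      exact le_trans le_sup_right heq.symm.le
    have hHorth : Module.finrank ℂ Hᗮ = 1 := by
      have := Submodule.finrank_add_finrank_orthogonal H
      rw [hfrE, hH] at this
      omega
    obtain ⟨n, hnH, hn0⟩ := Submodule.exists_mem_ne_zero_of_ne_bot (p := Hᗮ)
      (by intro h; rw [h] at hHorth; simp at hHorth)
    have hspan : (ℂ ∙ n) = Hᗮ :=
      Submodule.eq_of_le_of_finrank_le ((Submodule.span_singleton_le_iff_mem n Hᗮ).mpr hnH)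
        (by rw [finrank_span_singleton hn0]; omega)
    have hHeq : H = (ℂ ∙ n)ᗮ := by rw [hspan, Submodule.orthogonal_orthogonal]
    have hnT : n ∈ Tᗮ := (Submodule.orthogonal_le hTH) hnH
    have hPn : (Submodule.orthogonalProjection T n : EuclideanSpace ℂ (Fin N)) = 0 := by
      rw [Submodule.orthogonalProjectionOnto_apply_of_mem_orthogonal hnT]
      rfl
    have hnf : Tendsto (fun k => n -
        (Submodule.orthogonalProjection (τ (x k)) n : EuclideanSpace ℂ (Fin N))) atTop (𝓝 n) := by
      have := Tendsto.sub (tendsto_const_nhds : Tendsto (fun _ : ℕ => n) atTop (𝓝 n)) (hST n)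
      rw [hPn] at this
      simpa using this
    obtain ⟨k₀, hk₀⟩ := eventually_atTop.mp (hnf.eventually_ne hn0)
    set m : ℕ → EuclideanSpace ℂ (Fin N) :=
      fun k => n - (Submodule.orthogonalProjection (τ (x (k + k₀))) n : EuclideanSpace ℂ (Fin N))
      with hm_def
    have hm0 : ∀ k, m k ≠ 0 := fun k => hk₀ (k + k₀) (Nat.le_add_left _ _)
    have hmt : Tendsto m atTop (𝓝 n) := hnf.comp (tendsto_add_atTop_nat k₀)
    apply hnl
    refine ⟨fun k => x (k + k₀), fun k => (ℂ ∙ (m k))ᗮ, fun k => hxreg _, fun k => hxne _,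
      hx0.comp (tendsto_add_atTop_nat k₀), ?_, ?_, ?_⟩
    · intro k
      show Module.finrank ℂ ((ℂ ∙ (m k))ᗮ) = N - 1
      have h1 : Module.finrank ℂ (ℂ ∙ (m k)) = 1 := finrank_span_singleton (hm0 k)
      have h2 := Submodule.finrank_add_finrank_orthogonal (ℂ ∙ (m k))
      rw [hfrE, h1] at h2
      omega
    · intro k v hv
      rw [Submodule.mem_orthogonal_singleton_iff_inner_right]
      have hv' : (Submodule.orthogonalProjection (τ (x (k + k₀))) v : EuclideanSpace ℂ (Fin N)) = v :=
        Submodule.starProjection_eq_self_iff.mpr hv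
      have hsym : inner ℂ (Submodule.orthogonalProjection (τ (x (k + k₀))) n : EuclideanSpace ℂ (Fin N)) v =
          inner ℂ n (Submodule.orthogonalProjection (τ (x (k + k₀))) v : EuclideanSpace ℂ (Fin N)) :=
        Submodule.inner_starProjection_left_eq_right (τ (x (k + k₀))) n v
      rw [hv'] at hsym
      rw [hm_def]
      rw [inner_sub_left, hsym, sub_self]
    · intro v
      have hform : (fun k => (Submodule.orthogonalProjection ((ℂ ∙ (m k))ᗮ) v :
          EuclideanSpace ℂ (Fin N))) =
          fun k => v - ((inner ℂ (m k) v : ℂ) / (RCLike.ofReal (‖m k‖ ^ 2) : ℂ)) • m k := by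
        funext k
        rw [Submodule.coe_orthogonalProjectionOnto_apply, Submodule.starProjection_orthogonal_val,
            Submodule.starProjection_singleton]
      have hformH : (Submodule.orthogonalProjection H v : EuclideanSpace ℂ (Fin N)) =
          v - ((inner ℂ n v : ℂ) / (RCLike.ofReal (‖n‖ ^ 2) : ℂ)) • n := by
        rw [hHeq, Submodule.coe_orthogonalProjectionOnto_apply,
          Submodule.starProjection_orthogonal_val, Submodule.starProjection_singleton]
      have hden : (RCLike.ofReal (‖n‖ ^ 2) : ℂ) ≠ 0 :=
        RCLike.ofReal_ne_zero.mpr (pow_ne_zero 2 (norm_ne_zero_iff.mpr hn0))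
      have hcont : ContinuousAt (fun u : EuclideanSpace ℂ (Fin N) =>
          v - ((inner ℂ u v : ℂ) / (RCLike.ofReal (‖u‖ ^ 2) : ℂ)) • u) n := by
        have h1 : Continuous fun u : EuclideanSpace ℂ (Fin N) => (inner ℂ u v : ℂ) :=
          continuous_id.inner continuous_const
        have h2 : Continuous fun u : EuclideanSpace ℂ (Fin N) => (RCLike.ofReal (‖u‖ ^ 2) : ℂ) :=
          RCLike.continuous_ofReal.comp (continuous_norm.pow 2)
        exact continuousAt_const.sub
          (((h1.continuousAt.div h2.continuousAt hden)).smul continuousAt_id)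
      have := hcont.tendsto.comp hmt
      rw [hform, hformH]
      simpa [Function.comp_def] using this
end
end
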